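/- Let A be a C*-algebra and B ⊂ M(A) a C*-subalgebra. Suppose there exist projections P₁ ≤ P₂ ≤ ⋯ in B with P_n a → a for all a ∈ A. Then the element a = Σ_{n≥0} 2^{−n}(P_{n+1} − P_n) (with P₀ = 0) is a strictly positive element of A-closure with countable spectrum contained in {0} ∪ {2^{−n} : n ∈ ℕ}, and 1_{[2^{−n},1]}(a) = P_{n+1} for all n. -/

import Mathlib

open Filter Topology Polynomial

section Helpers
variable {M : Type*} [CStarAlgebra M] [PartialOrder M] [StarOrderedRing M]

/-- real scalar multiple of a projection is nonneg -/
private lemma smul_proj_nonneg {z : M} (hz1 : IsSelfAdjoint z) (hz2 : z * z = z)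
    {r : ℝ} (hr : 0 ≤ r) : 0 ≤ r • z := by
  have h1 : star (Real.sqrt r • z) * (Real.sqrt r • z) = r • z := by
    rw [star_smul, star_trivial, hz1.star_eq, smul_mul_assoc, mul_smul_comm, smul_smul,
      Real.mul_self_sqrt hr, hz2]
  rw [← h1]
  exact star_mul_self_nonneg _

private lemma proj_mul_of_le {p q : M} (hp1 : IsSelfAdjoint p) (hp2 : p * p = p)
    (hq1 : IsSelfAdjoint q) (hq2 : q * q = q) (hpq : p ≤ q) : q * p = p ∧ p * q = p := by
  have h1 : ((1 : M) - q) * ((1 : M) - q) = 1 - q := by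
    simp only [mul_sub, sub_mul, one_mul, mul_one, hq2]; abel
  have hx : star (((1 : M) - q) * p) * (((1 : M) - q) * p) = p * ((1 : M) - q) * p := by
    rw [star_mul, star_sub, star_one, hq1.star_eq, hp1.star_eq]
    calc p * (1 - q) * ((1 - q) * p) = p * ((1 - q) * (1 - q)) * p := by noncomm_ring
      _ = p * ((1 : M) - q) * p := by rw [h1]
  have hle : p * ((1 : M) - q) * p ≤ 0 := by
    have h2 : (1 : M) - q ≤ 1 - p := by exact sub_le_sub_left hpq 1
    have h3 := star_left_conjugate_le_conjugate h2 p
    rw [hp1.star_eq] at h3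
    have h4 : p * ((1 : M) - p) * p = 0 := by
      simp only [mul_sub, sub_mul, mul_one, hp2]; abel
    rw [h4] at h3; exact h3
  have hzero : ((1 : M) - q) * p = 0 := by
    rw [← CStarRing.star_mul_self_eq_zero_iff (((1 : M) - q) * p)]
    exact le_antisymm (hx ▸ hle) (star_mul_self_nonneg _)
  have hqp : q * p = p := by
    have h5 : p - q * p = 0 := by rw [← hzero, sub_mul, one_mul]
    exact (sub_eq_zero.mp h5).symm
  refine ⟨hqp, ?_⟩
  have := congrArg star hqp
  rwa [star_mul, hp1.star_eq, hq1.star_eq] at this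

/-- product of two "diagonal" sums over orthogonal family -/
private lemma orth_tsum_mul {Q : ℕ → M} (horth : ∀ j k, Q j * Q k = if j = k then Q k else 0)
    {c d : ℕ → ℝ} (hc : Summable fun k => c k • Q k) (hd : Summable fun k => d k • Q k) :
    (∑' k, c k • Q k) * (∑' k, d k • Q k) = ∑' k, (c k * d k) • Q k := by
  rw [← hc.tsum_mul_right]
  refine tsum_congr fun j => ?_
  rw [← hd.tsum_mul_left]
  rw [tsum_eq_single j ?_]
  · rw [smul_mul_assoc, mul_smul_comm, smul_smul, horth j j, if_pos rfl]
  · intro k hk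
    rw [smul_mul_assoc, mul_smul_comm, horth j k, if_neg (Ne.symm hk), smul_zero, smul_zero]

end Helpers

section Helpers2
variable {M : Type*} [CStarAlgebra M] [PartialOrder M] [StarOrderedRing M]

private lemma orth_summable {Q : ℕ → M} (hQnorm : ∀ k, ‖Q k‖ ≤ 1)
    {c : ℕ → ℝ} {D : ℝ} (hbd : ∀ᶠ k in atTop, |c k| ≤ D * ((2:ℝ)^k)⁻¹) :
    Summable fun k => c k • Q k := by
  refine Summable.of_norm_bounded_eventually_nat (g := fun k => D * ((2:ℝ)^k)⁻¹) ?_ ?_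
  · have h : Summable (fun k : ℕ => ((2:ℝ)^k)⁻¹) := by
      simpa [inv_pow] using
        summable_geometric_of_lt_one (by norm_num : (0:ℝ) ≤ 2⁻¹) (by norm_num : (2:ℝ)⁻¹ < 1)
    exact h.mul_left D
  · filter_upwards [hbd] with k hk
    calc ‖c k • Q k‖ = |c k| * ‖Q k‖ := by rw [norm_smul, Real.norm_eq_abs]
      _ ≤ |c k| * 1 := mul_le_mul_of_nonneg_left (hQnorm k) (abs_nonneg _)
      _ ≤ D * ((2:ℝ)^k)⁻¹ := by rw [mul_one]; exact hk

private lemma orth_norm_le {Q : ℕ → M} (hsa : ∀ k, IsSelfAdjoint (Q k))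
    (horth : ∀ j k, Q j * Q k = if j = k then Q k else 0)
    (hle1 : ∀ N : ℕ, ∑ k ∈ Finset.range N, Q k ≤ 1)
    {c : ℕ → ℝ} {C : ℝ} (hC : 0 ≤ C) (hbd : ∀ k, |c k| ≤ C)
    (hc : Summable fun k => c k • Q k) :
    ‖∑' k, c k • Q k‖ ≤ 3 * C := by
  set x := ∑' k, c k • Q k with hx
  have hQproj : ∀ k, Q k * Q k = Q k := fun k => by simpa using horth k k
  have htend : Tendsto (fun N => ∑ k ∈ Finset.range N, c k • Q k) atTop (𝓝 x) :=
    hc.hasSum.tendsto_sum_nat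
  have hPNidem : ∀ N : ℕ, (∑ k ∈ Finset.range N, Q k) * (∑ k ∈ Finset.range N, Q k)
      = ∑ k ∈ Finset.range N, Q k := by
    intro N
    rw [Finset.sum_mul_sum]
    refine Finset.sum_congr rfl fun i hi => ?_
    have : ∀ j ∈ Finset.range N, Q i * Q j = if i = j then Q j else 0 := fun j _ => horth i j
    rw [Finset.sum_congr rfl this, Finset.sum_ite_eq, if_pos hi]
  have hPNsa : ∀ N : ℕ, IsSelfAdjoint (∑ k ∈ Finset.range N, Q k) := by
    intro N
    rw [IsSelfAdjoint, star_sum]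
    exact Finset.sum_congr rfl fun k _ => (hsa k).star_eq
  have hCPN_le : ∀ N : ℕ, C • (∑ k ∈ Finset.range N, Q k) ≤ C • (1 : M) := by
    intro N
    have h1 : IsSelfAdjoint ((1 : M) - ∑ k ∈ Finset.range N, Q k) :=
      (IsSelfAdjoint.one M).sub (hPNsa N)
    have h2 : ((1:M) - ∑ k ∈ Finset.range N, Q k) * ((1:M) - ∑ k ∈ Finset.range N, Q k)
        = (1:M) - ∑ k ∈ Finset.range N, Q k := by
      simp only [mul_sub, sub_mul, one_mul, mul_one, hPNidem N]; abel
    have h3 : 0 ≤ C • ((1:M) - ∑ k ∈ Finset.range N, Q k) := smul_proj_nonneg h1 h2 hC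
    rw [smul_sub] at h3
    exact sub_nonneg.mp h3
  have hub : ∀ N : ℕ, ∑ k ∈ Finset.range N, c k • Q k ≤ C • (1 : M) := by
    intro N
    calc ∑ k ∈ Finset.range N, c k • Q k ≤ ∑ k ∈ Finset.range N, C • Q k := by
          refine Finset.sum_le_sum fun k _ => ?_
          have hnn : 0 ≤ (C - c k) • Q k :=
            smul_proj_nonneg (hsa k) (hQproj k) (by linarith [(abs_le.mp (hbd k)).2])
          rw [sub_smul] at hnn
          exact sub_nonneg.mp hnn
      _ = C • ∑ k ∈ Finset.range N, Q k := (Finset.smul_sum).symm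
      _ ≤ C • (1 : M) := hCPN_le N
  have hlb : ∀ N : ℕ, -(C • (1 : M)) ≤ ∑ k ∈ Finset.range N, c k • Q k := by
    intro N
    have h1 : 0 ≤ (∑ k ∈ Finset.range N, c k • Q k) + C • ∑ k ∈ Finset.range N, Q k := by
      rw [Finset.smul_sum, ← Finset.sum_add_distrib]
      refine Finset.sum_nonneg fun k _ => ?_
      rw [← add_smul]
      exact smul_proj_nonneg (hsa k) (hQproj k) (by linarith [(abs_le.mp (hbd k)).1])
    have h3 : -(C • ∑ k ∈ Finset.range N, Q k) ≤ ∑ k ∈ Finset.range N, c k • Q k :=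
      sub_nonneg.mp (by rwa [sub_neg_eq_add])
    exact le_trans (neg_le_neg (hCPN_le N)) h3
  have hxub : x ≤ C • (1 : M) := le_of_tendsto htend (Eventually.of_forall hub)
  have hxlb : -(C • (1 : M)) ≤ x := ge_of_tendsto htend (Eventually.of_forall hlb)
  have h0 : 0 ≤ x + C • (1 : M) := by
    have := sub_nonneg.mpr hxlb
    rwa [sub_neg_eq_add] at this
  have h2C : x + C • (1:M) ≤ algebraMap ℝ M (2*C) := by
    rw [Algebra.algebraMap_eq_smul_one, two_mul, add_smul]
    exact add_le_add_left hxub _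
  have hn1 : ‖x + C • (1:M)‖ ≤ 2*C :=
    (CStarAlgebra.norm_le_iff_le_algebraMap _ (by linarith) h0).mpr h2C
  have hn2 : ‖C • (1:M)‖ ≤ C := by
    have h0' : 0 ≤ C • (1:M) := smul_proj_nonneg (IsSelfAdjoint.one M) (one_mul 1) hC
    refine (CStarAlgebra.norm_le_iff_le_algebraMap _ hC h0').mpr ?_
    exact le_of_eq (Algebra.algebraMap_eq_smul_one C).symm
  calc ‖x‖ = ‖(x + C • (1:M)) - C • (1:M)‖ := by rw [add_sub_cancel_right]
    _ ≤ ‖x + C • (1:M)‖ + ‖C • (1:M)‖ := norm_sub_le _ _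
    _ ≤ 2*C + C := add_le_add hn1 hn2
    _ = 3*C := by ring

end Helpers2

/-- Let `A` be a closed two-sided ideal in a unital C*-algebra `M` (playing the role of
`M(A)`) and `B ⊆ M` a C*-subalgebra.  If `P₁ ≤ P₂ ≤ ⋯` are projections in `B` with
`Pₙ a → a` for all `a ∈ A` (and `P₀ = 0`), then `a₀ = Σₙ 2⁻ⁿ (P_{n+1} − Pₙ)` is a positive
strictly positive element for `A` (the closure of `a₀·A` is `A`) whose spectrum is contained
in the countable set `{0} ∪ {2⁻ⁿ}`, and whose spectral projections satisfy
`1_{[2⁻ⁿ,1]}(a₀) = P_{n+1}` for all `n`. -/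
theorem stmt5 {M : Type*} [CStarAlgebra M] [PartialOrder M] [StarOrderedRing M]
    (A : NonUnitalStarSubalgebra ℂ M) (hAclosed : IsClosed (A : Set M))
    (hAideal : ∀ m : M, ∀ a ∈ A, m * a ∈ A ∧ a * m ∈ A)
    (B : StarSubalgebra ℂ M) (hBclosed : IsClosed (B : Set M))
    (P : ℕ → M) (hP0 : P 0 = 0) (hPB : ∀ n, P n ∈ B)
    (hproj : ∀ n, IsSelfAdjoint (P n) ∧ IsIdempotentElem (P n))
    (hmono : Monotone P)
    (happrox : ∀ a ∈ A, Tendsto (fun n => P n * a) atTop (𝓝 a)) :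
    0 ≤ (∑' n : ℕ, (((2 : ℂ) ^ n)⁻¹) • (P (n + 1) - P n)) ∧
    closure ((fun x => (∑' n : ℕ, (((2 : ℂ) ^ n)⁻¹) • (P (n + 1) - P n)) * x) '' (A : Set M))
      = (A : Set M) ∧
    spectrum ℝ (∑' n : ℕ, (((2 : ℂ) ^ n)⁻¹) • (P (n + 1) - P n))
      ⊆ {0} ∪ Set.range (fun n : ℕ => ((2 : ℝ) ^ n)⁻¹) ∧
    ∀ n : ℕ,
      cfc (Set.indicator (Set.Icc (((2 : ℝ) ^ n)⁻¹) 1) (fun _ => (1 : ℝ)))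
          (∑' n : ℕ, (((2 : ℂ) ^ n)⁻¹) • (P (n + 1) - P n))
        = P (n + 1) := by
  classical
  have hPsa : ∀ n, IsSelfAdjoint (P n) := fun n => (hproj n).1
  have hPidem : ∀ n, P n * P n = P n := fun n => (hproj n).2
  set Q : ℕ → M := fun k => P (k + 1) - P k with hQdef
  have hPmul : ∀ i j : ℕ, i ≤ j → P j * P i = P i ∧ P i * P j = P i := fun i j hij =>
    proj_mul_of_le (hPsa i) (hPidem i) (hPsa j) (hPidem j) (hmono hij)
  have hQsa : ∀ k, IsSelfAdjoint (Q k) := fun k => (hPsa (k+1)).sub (hPsa k)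
  have horth : ∀ j k, Q j * Q k = if j = k then Q k else 0 := by
    intro j k
    rcases eq_or_ne j k with rfl | hne
    · rw [if_pos rfl]
      show (P (j+1) - P j) * (P (j+1) - P j) = P (j+1) - P j
      have e1 := hPidem (j+1)
      have e2 := (hPmul j (j+1) (by omega)).1
      have e3 := (hPmul j (j+1) (by omega)).2
      have e4 := hPidem j
      simp only [sub_mul, mul_sub, e1, e2, e3, e4]
      abel
    · rw [if_neg hne]
      rcases hne.lt_or_gt with h | h
      · show (P (j+1) - P j) * (P (k+1) - P k) = 0
        have e1 := (hPmul (j+1) (k+1) (by omega)).2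
        have e2 := (hPmul (j+1) k (by omega)).2
        have e3 := (hPmul j (k+1) (by omega)).2
        have e4 := (hPmul j k (by omega)).2
        simp only [sub_mul, mul_sub, e1, e2, e3, e4]
        abel
      · show (P (j+1) - P j) * (P (k+1) - P k) = 0
        have e1 := (hPmul (k+1) (j+1) (by omega)).1
        have e2 := (hPmul k (j+1) (by omega)).1
        have e3 := (hPmul (k+1) j (by omega)).1
        have e4 := (hPmul k j (by omega)).1
        simp only [sub_mul, mul_sub, e1, e2, e3, e4]
        abel
  have hQproj : ∀ k, Q k * Q k = Q k := fun k => by simpa using horth k k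
  have hQ0 : ∀ k, (0:M) ≤ Q k := by
    intro k
    have h : Q k = star (Q k) * Q k := by rw [(hQsa k).star_eq, hQproj k]
    rw [h]; exact star_mul_self_nonneg _
  have hP0le : ∀ n, (0:M) ≤ P n := fun n => by
    have h : P n = star (P n) * P n := by rw [(hPsa n).star_eq, hPidem n]
    rw [h]; exact star_mul_self_nonneg _
  have hPle1 : ∀ n, P n ≤ 1 := by
    intro n
    have h1 : IsSelfAdjoint ((1:M) - P n) := (IsSelfAdjoint.one M).sub (hPsa n)
    have h2 : ((1:M) - P n) * ((1:M) - P n) = (1:M) - P n := by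
      simp only [mul_sub, sub_mul, one_mul, mul_one, hPidem n]; abel
    have h3 : (0:M) ≤ (1:M) - P n := by
      rw [← h2]
      nth_rewrite 1 [← h1.star_eq]
      exact star_mul_self_nonneg _
    exact sub_nonneg.mp h3
  have hQle1 : ∀ k, Q k ≤ 1 := fun k =>
    le_trans (show P (k+1) - P k ≤ P (k+1) from sub_le_self _ (hP0le k)) (hPle1 (k+1))
  have hQnorm : ∀ k, ‖Q k‖ ≤ 1 := fun k =>
    (CStarAlgebra.norm_le_one_iff_of_nonneg (Q k) (hQ0 k)).mpr (hQle1 k)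
  have hPN : ∀ N : ℕ, ∑ k ∈ Finset.range N, Q k = P N := by
    intro N
    simp only [hQdef]
    rw [Finset.sum_range_sub (f := P), hP0, sub_zero]
  set w : ℕ → ℝ := fun k => ((2:ℝ)^k)⁻¹ with hwdef
  have hw_nonneg : ∀ k, 0 ≤ w k := fun k => by positivity
  have hw_pos : ∀ k, 0 < w k := fun k => by positivity
  have hw_le1 : ∀ k, w k ≤ 1 := by
    intro k
    rw [hwdef]
    simp only []
    rw [inv_le_one_iff₀]
    right
    exact one_le_pow₀ (by norm_num)
  have hsummW : ∀ {c : ℕ → ℝ} {D : ℝ}, (∀ᶠ k in atTop, |c k| ≤ D * w k) →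
      Summable (fun k => c k • Q k) := by
    intro c D h
    exact orth_summable hQnorm (by simpa [hwdef] using h)
  have hsummw : Summable fun k => w k • Q k :=
    hsummW (D := 1) (Eventually.of_forall fun k => by
      rw [abs_of_nonneg (hw_nonneg k), one_mul])
  set a₀ : M := ∑' k, w k • Q k with ha₀def
  have key : (∑' n : ℕ, (((2:ℂ)^n)⁻¹) • (P (n+1) - P n)) = a₀ := by
    rw [ha₀def]
    refine tsum_congr fun k => ?_
    rw [show ((2:ℂ)^k)⁻¹ = algebraMap ℝ ℂ (w k) by
      simp [hwdef, Complex.coe_algebraMap]]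
    rw [algebraMap_smul]
  rw [key]
  have hpart1 : (0:M) ≤ a₀ := by
    refine ge_of_tendsto hsummw.hasSum.tendsto_sum_nat (Eventually.of_forall fun N => ?_)
    exact Finset.sum_nonneg fun k _ => smul_proj_nonneg (hQsa k) (hQproj k) (hw_nonneg k)
  have hspec3 : spectrum ℝ a₀ ⊆ {0} ∪ Set.range (fun n : ℕ => ((2:ℝ)^n)⁻¹) := by
    intro x hx
    by_contra hxS
    simp only [Set.mem_union, Set.mem_singleton_iff, Set.mem_range, not_or, not_exists] at hxS
    obtain ⟨hx0, hxk⟩ := hxS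
    have hxw : ∀ k, x - w k ≠ 0 := fun k =>
      sub_ne_zero.mpr fun h => hxk k h.symm
    have hxabs : (0:ℝ) < |x| := abs_pos.mpr hx0
    set c : ℕ → ℝ := fun k => w k / (x * (x - w k)) with hcdef
    have hcbd : ∀ᶠ k in atTop, |c k| ≤ (2/(x*x)) * w k := by
      have hw0 : Tendsto w atTop (𝓝 0) := by
        rw [hwdef]
        have h := tendsto_pow_atTop_nhds_zero_of_lt_one (r := (2:ℝ)⁻¹) (by norm_num) (by norm_num)
        simpa [inv_pow] using h
      filter_upwards [hw0.eventually (gt_mem_nhds (by positivity : (0:ℝ) < |x|/2))] with k hk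
      have hxab : |x| / 2 ≤ |x - w k| := by
        have h1 : |x| - |w k| ≤ |x - w k| := abs_sub_abs_le_abs_sub x (w k)
        have h2 : |w k| = w k := abs_of_nonneg (hw_nonneg k)
        linarith
      have hden : |x| * (|x|/2) ≤ |x| * |x - w k| :=
        mul_le_mul_of_nonneg_left hxab (le_of_lt hxabs)
      calc |c k| = w k / (|x| * |x - w k|) := by
            rw [hcdef]; rw [abs_div, abs_of_nonneg (hw_nonneg k), abs_mul]
        _ ≤ w k / (|x| * (|x|/2)) :=
            div_le_div_of_nonneg_left (hw_nonneg k) (by positivity) hden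
        _ = (2/(x*x)) * w k := by
            rw [show |x| * (|x|/2) = x * x / 2 by
              rw [← mul_div_assoc, abs_mul_abs_self]]
            rw [div_div_eq_mul_div, mul_comm (w k) 2, mul_div_assoc]
            ring
    have hcsum : Summable fun k => c k • Q k := hsummW hcbd
    have hsum2 : Summable fun k => (x * c k) • Q k := by
      have := hcsum.const_smul x
      simpa [smul_smul] using this
    have hsum3 : Summable fun k => (x⁻¹ * w k) • Q k := by
      have := hsummw.const_smul x⁻¹
      simpa [smul_smul] using this
    have hsum4 : Summable fun k => (w k * c k) • Q k := by
      refine hsummW (D := 2/(x*x)) ?_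
      filter_upwards [hcbd] with k hk
      rw [abs_mul, abs_of_nonneg (hw_nonneg k)]
      calc w k * |c k| ≤ 1 * |c k| :=
            mul_le_mul_of_nonneg_right (hw_le1 k) (abs_nonneg _)
        _ = |c k| := one_mul _
        _ ≤ (2/(x*x)) * w k := hk
    have hco : ∀ k, x * c k - (x⁻¹ * w k + w k * c k) = 0 := by
      intro k
      have h1 : x - w k ≠ 0 := hxw k
      rw [hcdef]
      field_simp
      ring
    have hzero : (∑' k, (x * c k) • Q k) -
        ((∑' k, (x⁻¹ * w k) • Q k) + (∑' k, (w k * c k) • Q k)) = 0 := by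
      rw [← Summable.tsum_add hsum3 hsum4, ← Summable.tsum_sub hsum2 (hsum3.add hsum4)]
      have : ∀ k : ℕ, (x * c k) • Q k - ((x⁻¹ * w k) • Q k + (w k * c k) • Q k)
          = (0:ℝ) • Q k := by
        intro k
        rw [← add_smul, ← sub_smul, hco k]
      rw [tsum_congr this]
      simp
    set y : M := x⁻¹ • (1:M) + ∑' k, c k • Q k with hydef
    have e1 : (algebraMap ℝ M x) * (x⁻¹ • (1:M)) = 1 := by
      rw [Algebra.algebraMap_eq_smul_one, smul_mul_assoc, one_mul, smul_smul,
        mul_inv_cancel₀ hx0, one_smul]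
    have e1' : (x⁻¹ • (1:M)) * (algebraMap ℝ M x) = 1 := by
      rw [Algebra.algebraMap_eq_smul_one, smul_mul_assoc, one_mul, smul_smul,
        inv_mul_cancel₀ hx0, one_smul]
    have e2 : (algebraMap ℝ M x) * (∑' k, c k • Q k) = ∑' k, (x * c k) • Q k := by
      rw [Algebra.algebraMap_eq_smul_one, smul_mul_assoc, one_mul,
        ← Summable.tsum_const_smul x hcsum]
      exact tsum_congr fun k => smul_smul x (c k) (Q k)
    have e2' : (∑' k, c k • Q k) * (algebraMap ℝ M x) = ∑' k, (x * c k) • Q k := by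
      rw [Algebra.algebraMap_eq_smul_one, mul_smul_comm, mul_one,
        ← Summable.tsum_const_smul x hcsum]
      exact tsum_congr fun k => smul_smul x (c k) (Q k)
    have e3 : a₀ * (x⁻¹ • (1:M)) = ∑' k, (x⁻¹ * w k) • Q k := by
      rw [mul_smul_comm, mul_one, ha₀def, ← Summable.tsum_const_smul x⁻¹ hsummw]
      exact tsum_congr fun k => smul_smul x⁻¹ (w k) (Q k)
    have e3' : (x⁻¹ • (1:M)) * a₀ = ∑' k, (x⁻¹ * w k) • Q k := by
      rw [smul_mul_assoc, one_mul, ha₀def, ← Summable.tsum_const_smul x⁻¹ hsummw]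
      exact tsum_congr fun k => smul_smul x⁻¹ (w k) (Q k)
    have e4 : a₀ * (∑' k, c k • Q k) = ∑' k, (w k * c k) • Q k := by
      rw [ha₀def]; exact orth_tsum_mul horth hsummw hcsum
    have e4' : (∑' k, c k • Q k) * a₀ = ∑' k, (w k * c k) • Q k := by
      rw [ha₀def, orth_tsum_mul horth hcsum hsummw]
      exact tsum_congr fun k => by rw [mul_comm]
    have hU : (algebraMap ℝ M x - a₀) * y = 1 := by
      rw [hydef, sub_mul, mul_add, mul_add, e1, e2, e3, e4]
      calc 1 + (∑' k, (x * c k) • Q k) -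
          ((∑' k, (x⁻¹ * w k) • Q k) + (∑' k, (w k * c k) • Q k))
          = 1 + ((∑' k, (x * c k) • Q k) -
            ((∑' k, (x⁻¹ * w k) • Q k) + (∑' k, (w k * c k) • Q k))) := by abel
        _ = 1 := by rw [hzero, add_zero]
    have hU' : y * (algebraMap ℝ M x - a₀) = 1 := by
      rw [hydef, mul_sub, add_mul, add_mul, e1', e2', e3', e4']
      calc 1 + (∑' k, (x * c k) • Q k) -
          ((∑' k, (x⁻¹ * w k) • Q k) + (∑' k, (w k * c k) • Q k))
          = 1 + ((∑' k, (x * c k) • Q k) -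
            ((∑' k, (x⁻¹ * w k) • Q k) + (∑' k, (w k * c k) • Q k))) := by abel
        _ = 1 := by rw [hzero, add_zero]
    exact (spectrum.mem_iff.mp hx) ⟨⟨algebraMap ℝ M x - a₀, y, hU, hU'⟩, rfl⟩
  refine ⟨hpart1, ?_, ?_, ?_⟩
  · -- closure
    have htsumm : ∀ N : ℕ, Summable (fun k => (if k < N then (w k)⁻¹ else 0) • Q k) := by
      intro N
      refine summable_of_ne_finset_zero (s := Finset.range N) fun k hk => ?_
      rw [if_neg (fun h => hk (Finset.mem_range.mpr h)), zero_smul]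
    have hprod : ∀ N : ℕ, a₀ * (∑' k, (if k < N then (w k)⁻¹ else 0) • Q k) = P N := by
      intro N
      rw [ha₀def, orth_tsum_mul horth hsummw (htsumm N), ← hPN N]
      rw [tsum_eq_sum (s := Finset.range N) (fun k hk => by
        rw [if_neg (fun h => hk (Finset.mem_range.mpr h)), mul_zero, zero_smul])]
      refine Finset.sum_congr rfl fun k hk => ?_
      rw [if_pos (Finset.mem_range.mp hk), mul_inv_cancel₀ (ne_of_gt (hw_pos k)), one_smul]
    refine subset_antisymm ?_ ?_
    · refine closure_minimal ?_ hAclosed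
      rintro _ ⟨x, hx, rfl⟩
      exact (hAideal a₀ x hx).1
    · intro a ha
      refine mem_closure_of_tendsto (happrox a ha) (Eventually.of_forall fun N => ?_)
      refine ⟨(∑' k, (if k < N then (w k)⁻¹ else 0) • Q k) * a, (hAideal _ a ha).1, ?_⟩
      show a₀ * ((∑' k, (if k < N then (w k)⁻¹ else 0) • Q k) * a) = P N * a
      rw [← mul_assoc, hprod N]
  · exact hspec3
  · -- spectral projections
    intro n
    set f : ℝ → ℝ := fun t => min 1 (max 0 ((2:ℝ)^(n+1) * t - 1)) with hfdef
    have hfc : Continuous f := by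
      rw [hfdef]; fun_prop
    have hf0 : f 0 = 0 := by
      rw [hfdef]; norm_num
    have hfw : ∀ k, f (w k) = if k ≤ n then 1 else 0 := by
      intro k
      rcases le_or_gt k n with hk | hk
      · rw [if_pos hk, hfdef]
        have h3 : (2:ℝ)^(k+1) ≤ 2^(n+1) := pow_le_pow_right₀ (by norm_num) (by omega)
        have h4 : (2:ℝ) ≤ 2^(n+1) * w k := by
          rw [hwdef]
          simp only []
          rw [← div_eq_mul_inv, le_div_iff₀ (by positivity)]
          calc (2:ℝ) * 2^k = 2^(k+1) := by rw [pow_succ]; ring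
            _ ≤ 2^(n+1) := h3
        simp only []
        rw [max_eq_right (by linarith), min_eq_left (by linarith)]
      · rw [if_neg (by omega), hfdef]
        have h3 : (2:ℝ)^(n+1) ≤ 2^k := pow_le_pow_right₀ (by norm_num) (by omega)
        have h4 : (2:ℝ)^(n+1) * w k ≤ 1 := by
          rw [hwdef]
          simp only []
          rw [← div_eq_mul_inv, div_le_one (by positivity)]
          exact h3
        simp only []
        rw [max_eq_left (by linarith), min_eq_right (by linarith)]
    have hspec01 : spectrum ℝ a₀ ⊆ Set.Icc (0:ℝ) 1 := by
      intro t ht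
      rcases hspec3 ht with h | ⟨k, hk⟩
      · rw [Set.mem_singleton_iff] at h
        rw [h]; exact ⟨le_refl 0, zero_le_one⟩
      · rw [← hk]; exact ⟨le_of_lt (hw_pos k), hw_le1 k⟩
    have ha₀sa : IsSelfAdjoint a₀ := by
      have hterm : ∀ k : ℕ, star (w k • Q k) = w k • Q k := fun k => by
        rw [star_smul, star_trivial, (hQsa k).star_eq]
      show star a₀ = a₀
      rw [ha₀def, tsum_star]
      exact tsum_congr fun k => hterm k
    have hEq : (spectrum ℝ a₀).EqOn
        (Set.indicator (Set.Icc (((2:ℝ)^n)⁻¹) 1) fun _ => (1:ℝ)) f := by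
      intro t ht
      rcases hspec3 ht with h | ⟨k, hk⟩
      · rw [Set.mem_singleton_iff] at h
        subst h
        rw [Set.indicator_of_notMem, hf0]
        intro hmem
        have h1 : ((2:ℝ)^n)⁻¹ ≤ 0 := hmem.1
        have h2 : (0:ℝ) < ((2:ℝ)^n)⁻¹ := by positivity
        linarith
      · rw [← hk, hfw k]
        rcases le_or_gt k n with hkn | hkn
        · rw [if_pos hkn, Set.indicator_of_mem]
          refine ⟨?_, hw_le1 k⟩
          exact inv_anti₀ (by positivity) (pow_le_pow_right₀ (by norm_num) hkn)
        · rw [if_neg (by omega), Set.indicator_of_notMem]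
          intro hmem
          have h1 : ((2:ℝ)^n)⁻¹ ≤ w k := hmem.1
          have h2 : w k < ((2:ℝ)^n)⁻¹ := by
            rw [hwdef]
            simp only []
            exact inv_strictAnti₀ (by positivity) (pow_lt_pow_right₀ (by norm_num) hkn)
          linarith
    have hcfc1 : cfc (Set.indicator (Set.Icc (((2:ℝ)^n)⁻¹) 1) fun _ => (1:ℝ)) a₀
        = cfc f a₀ := cfc_congr hEq
    have hsmpow : ∀ i : ℕ, 1 ≤ i → Summable fun k => (w k ^ i) • Q k := by
      intro i hi
      refine hsummW (D := 1) (Eventually.of_forall fun k => ?_)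
      rw [abs_of_nonneg (by positivity), one_mul]
      calc w k ^ i ≤ w k ^ 1 := pow_le_pow_of_le_one (hw_nonneg k) (hw_le1 k) hi
        _ = w k := pow_one _
    have hpow : ∀ i : ℕ, 1 ≤ i → a₀ ^ i = ∑' k, (w k ^ i) • Q k := by
      intro i hi
      induction i with
      | zero => omega
      | succ m ih =>
        rcases Nat.eq_zero_or_pos m with rfl | hm
        · rw [pow_one, ha₀def]
          exact tsum_congr fun k => by rw [pow_one]
        · rw [pow_succ, ih hm]
          rw [ha₀def]
          rw [orth_tsum_mul horth (hsmpow m hm) hsummw]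
          exact tsum_congr fun k => by rw [← pow_succ]
    have haeval : ∀ q : ℝ[X], q.coeff 0 = 0 →
        (Summable fun k => (q.eval (w k)) • Q k) ∧
          Polynomial.aeval a₀ q = ∑' k, (q.eval (w k)) • Q k := by
      intro q hq0
      have hqbd : ∀ k, |q.eval (w k)| ≤
          (∑ i ∈ Finset.range (q.natDegree + 1), |q.coeff i|) * w k := by
        intro k
        rw [Polynomial.eval_eq_sum_range]
        calc |∑ i ∈ Finset.range (q.natDegree + 1), q.coeff i * w k ^ i|
            ≤ ∑ i ∈ Finset.range (q.natDegree + 1), |q.coeff i * w k ^ i| :=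
              Finset.abs_sum_le_sum_abs _ _
          _ ≤ ∑ i ∈ Finset.range (q.natDegree + 1), |q.coeff i| * w k := by
              refine Finset.sum_le_sum fun i _ => ?_
              rw [abs_mul]
              rcases Nat.eq_zero_or_pos i with rfl | hi
              · simp [hq0]
              · refine mul_le_mul_of_nonneg_left ?_ (abs_nonneg _)
                rw [abs_of_nonneg (by positivity)]
                calc w k ^ i ≤ w k ^ 1 := pow_le_pow_of_le_one (hw_nonneg k) (hw_le1 k) hi
                  _ = w k := pow_one _
          _ = (∑ i ∈ Finset.range (q.natDegree + 1), |q.coeff i|) * w k :=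
              (Finset.sum_mul _ _ _).symm
      have hqsumm : Summable fun k => (q.eval (w k)) • Q k :=
        hsummW (Eventually.of_forall hqbd)
      refine ⟨hqsumm, ?_⟩
      have hsummEach : ∀ i ∈ Finset.range (q.natDegree + 1),
          Summable fun k => (q.coeff i * w k ^ i) • Q k := by
        intro i _
        rcases Nat.eq_zero_or_pos i with rfl | hi
        · simpa [hq0] using (summable_zero : Summable fun _ : ℕ => (0:M))
        · refine hsummW (D := |q.coeff i|) (Eventually.of_forall fun k => ?_)
          rw [abs_mul, abs_of_nonneg (by positivity : (0:ℝ) ≤ w k ^ i)]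
          refine mul_le_mul_of_nonneg_left ?_ (abs_nonneg _)
          calc w k ^ i ≤ w k ^ 1 := pow_le_pow_of_le_one (hw_nonneg k) (hw_le1 k) hi
            _ = w k := pow_one _
      have heach : ∀ i ∈ Finset.range (q.natDegree + 1),
          q.coeff i • a₀ ^ i = ∑' k, (q.coeff i * w k ^ i) • Q k := by
        intro i _
        rcases Nat.eq_zero_or_pos i with rfl | hi
        · simp [hq0]
        · rw [hpow i hi, ← Summable.tsum_const_smul (q.coeff i) (hsmpow i hi)]
          exact tsum_congr fun k => smul_smul _ _ _
      rw [Polynomial.aeval_eq_sum_range, Finset.sum_congr rfl heach, ← Summable.tsum_finsetSum hsummEach]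
      refine tsum_congr fun k => ?_
      rw [Polynomial.eval_eq_sum_range, Finset.sum_smul]
    have hPrep : P (n+1) = ∑' k, (if k ≤ n then (1:ℝ) else 0) • Q k := by
      have h1 : ∑' k, (if k ≤ n then (1:ℝ) else 0) • Q k
          = ∑ k ∈ Finset.range (n+1), (if k ≤ n then (1:ℝ) else 0) • Q k :=
        tsum_eq_sum fun k hk => by
          rw [if_neg (fun h => hk (Finset.mem_range.mpr (by omega))), zero_smul]
      have h2 : ∑ k ∈ Finset.range (n+1), (if k ≤ n then (1:ℝ) else 0) • Q k
          = ∑ k ∈ Finset.range (n+1), Q k :=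
        Finset.sum_congr rfl fun k hk => by
          rw [if_pos (by have := Finset.mem_range.mp hk; omega), one_smul]
      rw [h1, h2, hPN]
    have hesum : Summable fun k => (if k ≤ n then (1:ℝ) else 0) • Q k :=
      summable_of_ne_finset_zero (s := Finset.range (n+1)) fun k hk => by
        rw [if_neg (fun h => hk (Finset.mem_range.mpr (by omega))), zero_smul]
    have hmain : cfc f a₀ = P (n+1) := by
      have hdiff : ∀ ε : ℝ, 0 < ε → ‖cfc f a₀ - P (n+1)‖ ≤ 8 * ε := by
        intro ε hε
        obtain ⟨q₀, hq₀⟩ := exists_polynomial_near_of_continuousOn 0 1 f hfc.continuousOn ε hε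
        set q : ℝ[X] := q₀ - Polynomial.C (q₀.coeff 0) with hqdef
        have hq0 : q.coeff 0 = 0 := by simp [hqdef]
        have hqeval : ∀ t : ℝ, q.eval t = q₀.eval t - q₀.coeff 0 := fun t => by
          simp [hqdef]
        have hc0 : |q₀.coeff 0| < ε := by
          have h := hq₀ 0 (by norm_num)
          rw [hf0, sub_zero, ← Polynomial.coeff_zero_eq_eval_zero] at h
          exact h
        have hq2 : ∀ t ∈ Set.Icc (0:ℝ) 1, |q.eval t - f t| ≤ 2*ε := by
          intro t ht
          rw [hqeval]
          calc |q₀.eval t - q₀.coeff 0 - f t| = |(q₀.eval t - f t) - q₀.coeff 0| := by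
                ring_nf
            _ ≤ |q₀.eval t - f t| + |q₀.coeff 0| := abs_sub _ _
            _ ≤ 2*ε := by have := hq₀ t ht; linarith
        obtain ⟨hqsumm, hqaeval⟩ := haeval q hq0
        have h1 : cfc (fun t : ℝ => q.eval t) a₀ = Polynomial.aeval a₀ q :=
          cfc_polynomial q a₀ ha₀sa
        have h2 : cfc (fun t => f t - q.eval t) a₀ = cfc f a₀ - Polynomial.aeval a₀ q := by
          rw [cfc_sub f (fun t : ℝ => q.eval t) a₀ hfc.continuousOn
            (q.continuous).continuousOn, h1]
        have h3 : ‖cfc f a₀ - Polynomial.aeval a₀ q‖ ≤ 2*ε := by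
          rw [← h2]
          refine norm_cfc_le (by positivity) fun t ht => ?_
          rw [Real.norm_eq_abs, abs_sub_comm]
          exact hq2 t (hspec01 ht)
        have h4 : ‖Polynomial.aeval a₀ q - P (n+1)‖ ≤ 6*ε := by
          rw [hqaeval, hPrep, ← Summable.tsum_sub hqsumm hesum]
          have hcong : ∀ k : ℕ, q.eval (w k) • Q k - (if k ≤ n then (1:ℝ) else 0) • Q k
              = (q.eval (w k) - (if k ≤ n then (1:ℝ) else 0)) • Q k := fun k =>
            (sub_smul _ _ _).symm
          rw [tsum_congr hcong]
          have hb : ∀ k, |q.eval (w k) - (if k ≤ n then (1:ℝ) else 0)| ≤ 2*ε := by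
            intro k
            rw [← hfw k]
            exact hq2 (w k) ⟨hw_nonneg k, hw_le1 k⟩
          have hsummd : Summable fun k =>
              (q.eval (w k) - (if k ≤ n then (1:ℝ) else 0)) • Q k := by
            have := hqsumm.sub hesum
            refine this.congr fun k => ?_
            rw [sub_smul]
          calc ‖∑' k, (q.eval (w k) - (if k ≤ n then (1:ℝ) else 0)) • Q k‖
              ≤ 3 * (2*ε) := orth_norm_le hQsa horth
                (fun N => by rw [hPN]; exact hPle1 N) (by positivity) hb hsummd
            _ = 6*ε := by ring
        calc ‖cfc f a₀ - P (n+1)‖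
            = ‖(cfc f a₀ - Polynomial.aeval a₀ q) + (Polynomial.aeval a₀ q - P (n+1))‖ := by
              rw [sub_add_sub_cancel]
          _ ≤ ‖cfc f a₀ - Polynomial.aeval a₀ q‖ + ‖Polynomial.aeval a₀ q - P (n+1)‖ :=
              norm_add_le _ _
          _ ≤ 2*ε + 6*ε := add_le_add h3 h4
          _ = 8*ε := by ring
      have hzero : ‖cfc f a₀ - P (n+1)‖ ≤ 0 := by
        by_contra hcon
        push_neg at hcon
        have := hdiff (‖cfc f a₀ - P (n+1)‖ / 16) (by linarith)
        linarith
      have := norm_le_zero_iff.mp hzero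
      rw [sub_eq_zero] at this
      exact this
    exact hcfc1.trans hmain
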